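/- For every maximal isotropic subspace W ⊆ V one has W = {v ∈ V : m_v(λ) = 0 for all λ ∈ ℓ_W}. Consequently, the assignment W ↦ ℓ_W, from maximal isotropic subspaces of V to lines in ∧U, is injective. -/

import Mathlib

/-!
Setup: `k` a field of characteristic zero, `U` a finite-dimensional `k`-vector space,
`V := U ⊕ U*` with the hyperbolic symmetric bilinear form; `mOp v` is the operator
`α ↦ w ∧ α + θ⌟α` on `∧U`, and `ℓ_W := {λ : m_v λ = 0 ∀ v ∈ W}`.
For every maximal isotropic `W`: `W = {v ∈ V : m_v λ = 0 ∀ λ ∈ ℓ_W}`, and consequently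
`W ↦ ℓ_W` is injective on maximal isotropic subspaces.
-/

open Module

/-- The operator `m_v : ∧U → ∧U`, `α ↦ w ∧ α + θ⌟α`, for `v = (w,θ) ∈ V = U × U*`. -/
noncomputable def mOp (k : Type*) [Field k] (U : Type*) [AddCommGroup U] [Module k U]
    (v : U × Module.Dual k U) : Module.End k (ExteriorAlgebra k U) :=
  LinearMap.mulLeft k (ExteriorAlgebra.ι k v.1)
    + CliffordAlgebra.contractLeft (Q := (0 : QuadraticForm k U)) v.2

/-- The pure spinor space `ℓ_W := {λ ∈ ∧U : m_v(λ) = 0 for all v ∈ W}`. -/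
noncomputable def ellW (k : Type*) [Field k] (U : Type*) [AddCommGroup U] [Module k U]
    (W : Submodule k (U × Module.Dual k U)) : Submodule k (ExteriorAlgebra k U) :=
  ⨅ v ∈ W, LinearMap.ker (mOp k U v)

section Lists
variable {R : Type*} [Ring R]

lemma prod_anticomm (T : R) : ∀ L : List R, (∀ S ∈ L, T * S = -(S * T)) →
    T * L.prod = ((-1 : ℤ) ^ L.length) • (L.prod * T) := by
  intro L
  induction L with
  | nil => simp
  | cons S L ih =>
    intro h
    have hS := h S (by simp)
    have h2 := ih (fun x hx => h x (by simp [hx]))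
    simp only [List.prod_cons, List.length_cons, pow_succ]
    rw [← mul_assoc, hS, neg_mul, mul_assoc, h2, mul_smul_comm, mul_assoc]
    rw [← neg_smul]
    congr 1
    ring

lemma prod_self_zero : ∀ L : List R, L.Pairwise (fun a b => a * b = -(b * a)) →
    (∀ S ∈ L, S * S = 0) → ∀ T ∈ L, T * L.prod = 0 := by
  intro L
  induction L with
  | nil => simp
  | cons S L ih =>
    intro hp hsq T hT
    rw [List.pairwise_cons] at hp
    rcases List.mem_cons.mp hT with rfl | hT
    · rw [List.prod_cons, ← mul_assoc, hsq T (by simp), zero_mul]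
    · have hTS : T * S = -(S * T) := by
        rw [hp.1 T hT, neg_neg]
      rw [List.prod_cons, ← mul_assoc, hTS, neg_mul, mul_assoc,
        ih hp.2 (fun x hx => hsq x (by simp [hx])) T hT, mul_zero, neg_zero]

end Lists

section Fold
variable {k : Type*} [Field k] {A : Type*} [AddCommGroup A] [Module k A]

lemma foldl_zero (P : List (Module.End k A × Module.End k A)) :
    P.foldl (fun y p => p.2 y) 0 = 0 := by
  induction P with
  | nil => rfl
  | cons p P ih => simp only [List.foldl_cons, map_zero, ih]

lemma foldC : ∀ (P : List (Module.End k A × Module.End k A)) (x : A),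
    P.Pairwise (fun p q => p.2 * q.1 = -(q.1 * p.2)) →
    (∀ p ∈ P, p.2 * p.1 + p.1 * p.2 = 1) →
    (∀ p ∈ P, p.2 x = 0) →
    P.foldl (fun y p => p.2 y) ((P.map Prod.fst).prod x) = x := by
  intro P
  induction P with
  | nil => intro x _ _ _; simp [Module.End.one_apply]
  | cons p P ih =>
    intro x hp hcm hcx
    rw [List.pairwise_cons] at hp
    have hanti : ∀ S ∈ P.map Prod.fst, p.2 * S = -(S * p.2) := by
      intro S hS
      rw [List.mem_map] at hS
      obtain ⟨q, hq, rfl⟩ := hS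
      exact hp.1 q hq
    have hkey : p.2 (((p :: P).map Prod.fst).prod x) = (P.map Prod.fst).prod x := by
      have h1 : p.2 * p.1 = 1 - p.1 * p.2 := by
        exact eq_sub_of_add_eq (hcm p (by simp))
      have h2 := prod_anticomm p.2 (P.map Prod.fst) hanti
      have h3 : (p.2 * (P.map Prod.fst).prod) x = 0 := by
        rw [h2]
        have : ((P.map Prod.fst).prod * p.2) x = 0 := by
          rw [Module.End.mul_apply, hcx p (by simp), map_zero]
        rw [LinearMap.smul_apply, this, smul_zero]
      calc p.2 (((p :: P).map Prod.fst).prod x)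
          = ((p.2 * p.1) * (P.map Prod.fst).prod) x := by
            simp [Module.End.mul_apply, List.map_cons, List.prod_cons, mul_assoc]
        _ = (P.map Prod.fst).prod x - (p.1 * (p.2 * (P.map Prod.fst).prod)) x := by
            rw [h1]; simp [sub_mul, mul_assoc, LinearMap.sub_apply, Module.End.one_apply]
        _ = (P.map Prod.fst).prod x := by
            rw [Module.End.mul_apply, h3, map_zero, sub_zero]
    rw [List.foldl_cons, hkey]
    exact ih x hp.2 (fun q hq => hcm q (by simp [hq])) (fun q hq => hcx q (by simp [hq]))
end Fold

section mOpBasic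
open Module
variable {k : Type*} [Field k] {U : Type*} [AddCommGroup U] [Module k U]

local notation "ctr" => CliffordAlgebra.contractLeft (Q := (0 : QuadraticForm k U))

lemma mOp_apply (v : U × Dual k U) (x : ExteriorAlgebra k U) :
    mOp k U v x = ExteriorAlgebra.ι k v.1 * x + ctr v.2 x := rfl

/-- `mOp` as a linear map in `v`. -/
noncomputable def mOpL (k : Type*) [Field k] (U : Type*) [AddCommGroup U] [Module k U] :
    (U × Module.Dual k U) →ₗ[k] Module.End k (ExteriorAlgebra k U) where
  toFun := mOp k U
  map_add' x y := by
    refine LinearMap.ext fun α => ?_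
    simp only [mOp_apply, LinearMap.add_apply, Prod.fst_add, Prod.snd_add, map_add, add_mul]
    abel
  map_smul' c x := by
    refine LinearMap.ext fun α => ?_
    simp only [mOp_apply, RingHom.id_apply, LinearMap.smul_apply, Prod.smul_fst, Prod.smul_snd,
      map_smul, smul_mul_assoc, LinearMap.smul_apply, smul_add]

lemma mOp_one_eq_zero (v : U × Dual k U) (hv : v.1 = 0) : mOp k U v 1 = 0 := by
  rw [mOp_apply, hv, map_zero, zero_mul, CliffordAlgebra.contractLeft_one, add_zero]

lemma ctr_ctr' (d d' : Dual k U) (x : ExteriorAlgebra k U) :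
    ctr d (ctr d' x) + ctr d' (ctr d x) = 0 := by
  have h := CliffordAlgebra.contractLeft_contractLeft (Q := (0 : QuadraticForm k U)) (d := d + d') x
  simp only [map_add, LinearMap.add_apply, CliffordAlgebra.contractLeft_contractLeft] at h
  rw [zero_add, add_zero] at h
  rw [add_comm]; exact h

lemma mOp_mOp (v w : U × Dual k U) (α : ExteriorAlgebra k U) :
    mOp k U v (mOp k U w α) + mOp k U w (mOp k U v α) = (v.2 w.1 + w.2 v.1) • α := by
  obtain ⟨a, dv⟩ := v
  obtain ⟨b, dw⟩ := w
  simp only [mOp_apply, mul_add, map_add]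
  rw [CliffordAlgebra.contractLeft_ι_mul, CliffordAlgebra.contractLeft_ι_mul]
  have hcc := ctr_ctr' dv dw α
  have hii : ExteriorAlgebra.ι k a * (ExteriorAlgebra.ι k b * α)
      + ExteriorAlgebra.ι k b * (ExteriorAlgebra.ι k a * α) = 0 := by
    rw [← mul_assoc, ← mul_assoc, ← add_mul, ExteriorAlgebra.ι_add_mul_swap, zero_mul]
  rw [add_smul]
  linear_combination (norm := module) hcc + hii

/-- The Clifford relation in operator form. -/
lemma mOp_bracket (v w : U × Dual k U) :
    mOp k U v * mOp k U w + mOp k U w * mOp k U v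
      = (v.2 w.1 + w.2 v.1) • (1 : Module.End k (ExteriorAlgebra k U)) := by
  refine LinearMap.ext fun α => ?_
  simp only [LinearMap.add_apply, Module.End.mul_apply, LinearMap.smul_apply, Module.End.one_apply]
  exact mOp_mOp v w α

lemma mOp_anticomm {v w : U × Dual k U} (h : v.2 w.1 + w.2 v.1 = 0) :
    mOp k U v * mOp k U w = -(mOp k U w * mOp k U v) := by
  have := mOp_bracket v w
  rw [h, zero_smul] at this
  exact eq_neg_of_add_eq_zero_left this

lemma mOp_sq_zero [CharZero k] {v : U × Dual k U} (h : v.2 v.1 = 0) :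
    mOp k U v * mOp k U v = 0 := by
  have h2 := mOp_bracket v v
  rw [h, add_zero, zero_smul] at h2
  have h3 : (2 : k) • (mOp k U v * mOp k U v) = 0 := by
    rw [two_smul]; exact h2
  have h4 : (2 : k) ≠ 0 := two_ne_zero
  exact (smul_eq_zero.mp h3).resolve_left h4

lemma mem_ellW {W : Submodule k (U × Dual k U)} {l : ExteriorAlgebra k U} :
    l ∈ ellW k U W ↔ ∀ v ∈ W, mOp k U v l = 0 := by
  simp [ellW, Submodule.mem_iInf, LinearMap.mem_ker]

lemma exists_spinor [CharZero k] [FiniteDimensional k U] (W : Submodule k (U × Dual k U))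
    (hiso : ∀ v ∈ W, ∀ w ∈ W, v.2 w.1 + w.2 v.1 = (0 : k)) :
    ∃ l ∈ ellW k U W, l ≠ 0 := by
  classical
  set E : Submodule k U := W.map (LinearMap.fst k U (Dual k U)) with hE
  set n := Module.finrank k E with hn
  let b : Basis (Fin n) k E := Module.finBasis k E
  let u : Fin n → U := fun i => (b i : U)
  have hmem : ∀ i, ∃ y ∈ W, (LinearMap.fst k U (Dual k U)) y = u i := by
    intro i
    exact Submodule.mem_map.mp (b i).2
  choose w hwW hw1 using hmem
  have hw1' : ∀ i, (w i).1 = u i := hw1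
  let f : Fin n → Dual k U := fun i => Subspace.dualLift E (b.coord i)
  have hfu : ∀ i j, f i (u j) = if j = i then 1 else 0 := by
    intro i j
    have : f i (u j) = b.coord i (b j) := Subspace.dualLift_of_subtype (φ := b.coord i) (b j)
    rw [this, Basis.coord_apply, Basis.repr_self, Finsupp.single_apply]
  let P : List (Module.End k (ExteriorAlgebra k U) × Module.End k (ExteriorAlgebra k U)) :=
    List.ofFn (fun i => (mOp k U (w i), mOp k U (0, f i)))
  have hPmap : P.map Prod.fst = List.ofFn (fun i => mOp k U (w i)) := by
    rw [List.map_ofFn]; rfl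
  set L : List (Module.End k (ExteriorAlgebra k U)) := List.ofFn (fun i => mOp k U (w i)) with hL
  set l : ExteriorAlgebra k U := L.prod 1 with hl
  -- L is pairwise anticommuting with square zero
  have hLpair : L.Pairwise (fun a c => a * c = -(c * a)) := by
    rw [hL, List.pairwise_ofFn]
    intro i j _
    exact mOp_anticomm (hiso _ (hwW i) _ (hwW j))
  have hLsq : ∀ S ∈ L, S * S = 0 := by
    rw [hL]
    rw [List.forall_mem_ofFn_iff]
    intro i
    refine mOp_sq_zero ?_
    have := hiso _ (hwW i) _ (hwW i)
    -- v.2 v.1 + v.2 v.1 = 0 => v.2 v.1 = 0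
    have h2 : (2 : k) * ((w i).2 (w i).1) = 0 := by linear_combination this
    rcases mul_eq_zero.mp h2 with h | h
    · exact absurd h two_ne_zero
    · exact h
  refine ⟨l, ?_, ?_⟩
  · -- l ∈ ellW
    rw [mem_ellW]
    intro v hv
    have hv1E : v.1 ∈ E := Submodule.mem_map.mpr ⟨v, hv, rfl⟩
    set e : E := ⟨v.1, hv1E⟩ with he
    set c := b.repr e with hc
    set v' : U × Dual k U := v - ∑ i, c i • w i with hv'
    have hv'W : v' ∈ W := by
      refine Submodule.sub_mem _ hv (Submodule.sum_mem _ fun i _ => Submodule.smul_mem _ _ (hwW i))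
    have hsum1 : (∑ i, c i • w i).1 = v.1 := by
      rw [Prod.fst_sum]
      have : ∑ i, (c i • w i).1 = ∑ i, c i • u i := by
        refine Finset.sum_congr rfl fun i _ => ?_
        rw [Prod.smul_fst, hw1' i]
      rw [this]
      have hrepr : ∑ i, c i • b i = e := b.sum_repr e
      calc ∑ i, c i • u i = ((∑ i, c i • b i : E) : U) := by
            rw [Submodule.coe_sum]
            exact Finset.sum_congr rfl fun i _ => by rw [SetLike.val_smul]
        _ = v.1 := by rw [hrepr]
    have hv'1 : v'.1 = 0 := by
      rw [hv', Prod.fst_sub, hsum1, sub_self]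
    have hdecomp : v = (∑ i, c i • w i) + v' := by rw [hv']; abel
    have hmv : mOpL k U v = (∑ i, c i • mOpL k U (w i)) + mOpL k U v' := by
      rw [hdecomp, map_add, map_sum]
      simp only [map_smul]
    have hterm : ∀ i, mOp k U (w i) l = 0 := by
      intro i
      have hmemL : mOp k U (w i) ∈ L := by
        rw [hL, List.mem_ofFn]; exact ⟨i, rfl⟩
      have := prod_self_zero L hLpair hLsq _ hmemL
      have := congrArg (fun g => g (1 : ExteriorAlgebra k U)) this
      simpa only [Module.End.mul_apply, LinearMap.zero_apply] using this
    have hv'term : mOp k U v' l = 0 := by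
      have hanti : ∀ S ∈ L, mOp k U v' * S = -(S * mOp k U v') := by
        rw [hL, List.forall_mem_ofFn_iff]
        intro j
        refine mOp_anticomm ?_
        have := hiso _ hv'W _ (hwW j)
        exact this
      have := prod_anticomm (mOp k U v') L hanti
      have h0 := congrArg (fun g => g (1 : ExteriorAlgebra k U)) this
      simp only [Module.End.mul_apply, LinearMap.smul_apply] at h0
      rw [mOp_one_eq_zero v' hv'1, map_zero, smul_zero] at h0
      exact h0
    have : mOpL k U v l = 0 := by
      rw [hmv]
      simp only [LinearMap.add_apply, LinearMap.sum_apply, LinearMap.smul_apply]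
      have hz : ∀ x : Fin n, c x • ((mOpL k U) (w x)) l = 0 := fun x => by
        rw [show (mOpL k U) (w x) = mOp k U (w x) from rfl, hterm x, smul_zero]
      rw [Finset.sum_congr rfl (fun x _ => hz x), Finset.sum_const_zero,
        show (mOpL k U) v' = mOp k U v' from rfl, hv'term, add_zero]
    exact this
  · -- l ≠ 0
    intro h0
    have hfold := foldC P 1 ?_ ?_ ?_
    · rw [hPmap, ← hl, h0, foldl_zero] at hfold
      exact one_ne_zero hfold.symm
    · rw [List.pairwise_ofFn]
      intro i j hij
      refine mOp_anticomm ?_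
      simp only [hw1' j]
      rw [hfu i (j)]
      simp [Fin.ne_of_lt hij, (Fin.ne_of_lt hij).symm]
    · rw [List.forall_mem_ofFn_iff]
      intro i
      have : (mOp k U (0, f i)) * (mOp k U (w i)) + (mOp k U (w i)) * (mOp k U (0, f i))
          = ((f i) (w i).1 + (w i).2 0) • (1 : Module.End k (ExteriorAlgebra k U)) :=
        mOp_bracket (0, f i) (w i)
      rw [this, hw1' i, hfu i i, map_zero]
      simp
    · rw [List.forall_mem_ofFn_iff]
      intro i
      exact mOp_one_eq_zero (0, f i) rfl

lemma isotropic_finrank_le [FiniteDimensional k U] (W : Submodule k (U × Dual k U))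
    (hiso : ∀ v ∈ W, ∀ w ∈ W, v.2 w.1 + w.2 v.1 = (0 : k)) :
    Module.finrank k W ≤ Module.finrank k U := by
  classical
  let B : (U × Dual k U) →ₗ[k] Dual k (U × Dual k U) :=
    LinearMap.mk₂ k (fun v w => v.2 w.1 + w.2 v.1)
    (fun m₁ m₂ n => by
      simp only [Prod.fst_add, Prod.snd_add, LinearMap.add_apply, map_add]; ring)
    (fun c m n => by
      simp only [Prod.smul_fst, Prod.smul_snd, LinearMap.smul_apply, map_smul,
        smul_eq_mul]; ring)
    (fun m n₁ n₂ => by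
      simp only [Prod.fst_add, Prod.snd_add, LinearMap.add_apply, map_add]; ring)
    (fun c m n => by
      simp only [Prod.smul_fst, Prod.smul_snd, LinearMap.smul_apply, map_smul,
        smul_eq_mul]; ring)
  have hBapp : ∀ v w : U × Dual k U, B v w = v.2 w.1 + w.2 v.1 := fun v w => rfl
  have hBinj : Function.Injective B := by
    rw [← LinearMap.ker_eq_bot]
    rw [Submodule.eq_bot_iff]
    intro v hv
    rw [LinearMap.mem_ker] at hv
    have hall : ∀ w : U × Dual k U, v.2 w.1 + w.2 v.1 = 0 := by
      intro w
      have := congrArg (fun φ => φ w) hv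
      simpa [hBapp] using this
    have h2 : v.2 = 0 := by
      ext x
      have := hall (x, 0)
      simpa using this
    have h1 : v.1 = 0 := by
      rw [← Module.forall_dual_apply_eq_zero_iff k]
      intro φ
      have := hall (0, φ)
      simpa using this
    exact Prod.ext h1 h2
  have hBsurj : Function.Surjective B := by
    rw [← LinearMap.injective_iff_surjective_of_finrank_eq_finrank
      (Subspace.dual_finrank_eq (K := k) (V := U × Dual k U)).symm]
    exact hBinj
  let ψ : (U × Dual k U) →ₗ[k] Dual k W := (W.subtype.dualMap).comp B
  have hψsurj : Function.Surjective ψ :=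
    by
      have hsub : Function.Surjective W.subtype.dualMap := Subspace.dualRestrict_surjective (W := W)
      exact hsub.comp hBsurj
  have hWker : W ≤ LinearMap.ker ψ := by
    intro v hv
    rw [LinearMap.mem_ker]
    ext x
    have := hiso v hv x x.2
    simpa [ψ, hBapp] using this
  have hrank := LinearMap.finrank_range_add_finrank_ker ψ
  rw [LinearMap.range_eq_top.mpr hψsurj] at hrank
  have hTop : Module.finrank k (⊤ : Submodule k (Dual k W)) = Module.finrank k W := by
    rw [finrank_top]
    exact Subspace.dual_finrank_eq (K := k) (V := ↥W)
  rw [hTop] at hrank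
  have hle : Module.finrank k W ≤ Module.finrank k (LinearMap.ker ψ) :=
    Submodule.finrank_mono hWker
  have hVrank : Module.finrank k (U × Dual k U) = 2 * Module.finrank k U := by
    rw [Module.finrank_prod]
    rw [Subspace.dual_finrank_eq (K := k) (V := U)]
    ring
  omega

end mOpBasic

section Main
variable {k : Type*} [Field k] [CharZero k] {U : Type*} [AddCommGroup U] [Module k U]
  [FiniteDimensional k U]
open Module

lemma main_part1 (W : Submodule k (U × Dual k U))
    (hiso : ∀ v ∈ W, ∀ w ∈ W, v.2 w.1 + w.2 v.1 = (0 : k))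
    (hrank : finrank k W = finrank k U) (v : U × Dual k U) :
    v ∈ W ↔ ∀ l ∈ ellW k U W, mOp k U v l = 0 := by
  constructor
  · intro hv l hl
    exact mem_ellW.mp hl v hv
  · intro h
    obtain ⟨l, hlW, hl0⟩ := exists_spinor W hiso
    have hvl : mOp k U v l = 0 := h l hlW
    have hbr : ∀ w ∈ W, v.2 w.1 + w.2 v.1 = 0 := by
      intro w hw
      have hwl : mOp k U w l = 0 := mem_ellW.mp hlW w hw
      have hb := mOp_mOp v w l
      rw [hvl, hwl, map_zero, map_zero, add_zero] at hb
      exact (smul_eq_zero.mp hb.symm).resolve_right hl0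
    have hvv : v.2 v.1 = 0 := by
      have hb := mOp_mOp v v l
      rw [hvl, map_zero, add_zero] at hb
      have h2 : v.2 v.1 + v.2 v.1 = 0 := (smul_eq_zero.mp hb.symm).resolve_right hl0
      have h3 : (2 : k) * (v.2 v.1) = 0 := by linear_combination h2
      rcases mul_eq_zero.mp h3 with hx | hx
      · exact absurd hx two_ne_zero
      · exact hx
    set W' : Submodule k (U × Dual k U) := W ⊔ Submodule.span k {v} with hW'
    have hiso' : ∀ x ∈ W', ∀ y ∈ W', x.2 y.1 + y.2 x.1 = (0 : k) := by
      intro x hx y hy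
      obtain ⟨a, ha, b, hb, rfl⟩ := Submodule.mem_sup.mp hx
      obtain ⟨c, rfl⟩ := Submodule.mem_span_singleton.mp hb
      obtain ⟨a', ha', b', hb', rfl⟩ := Submodule.mem_sup.mp hy
      obtain ⟨c', rfl⟩ := Submodule.mem_span_singleton.mp hb'
      simp only [Prod.fst_add, Prod.snd_add, Prod.smul_fst, Prod.smul_snd, map_add, map_smul,
        LinearMap.add_apply, LinearMap.smul_apply, smul_eq_mul]
      linear_combination hiso a ha a' ha' + c' * hbr a ha + c * hbr a' ha' + 2 * c * c' * hvv
    have hle : finrank k W' ≤ finrank k U := isotropic_finrank_le W' hiso'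
    have hWW' : W = W' := by
      refine Submodule.eq_of_le_of_finrank_le le_sup_left ?_
      rw [hrank]; exact hle
    rw [hWW']
    exact Submodule.mem_sup_right (Submodule.mem_span_singleton_self v)

end Main


/-- for every maximal isotropic subspace `W ⊆ V` one has
`W = {v ∈ V : m_v(λ) = 0 for all λ ∈ ℓ_W}`; consequently `W ↦ ℓ_W` is injective on
maximal isotropic subspaces. -/
theorem stmt4 (k : Type*) [Field k] [CharZero k] (U : Type*) [AddCommGroup U] [Module k U]
    [FiniteDimensional k U] :
    (∀ W : Submodule k (U × Module.Dual k U),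
      (∀ v ∈ W, ∀ w ∈ W, v.2 w.1 + w.2 v.1 = (0 : k)) →
      Module.finrank k W = Module.finrank k U →
      ∀ v : U × Module.Dual k U, v ∈ W ↔ ∀ l ∈ ellW k U W, mOp k U v l = 0)
    ∧ ∀ W₁ W₂ : Submodule k (U × Module.Dual k U),
      (∀ v ∈ W₁, ∀ w ∈ W₁, v.2 w.1 + w.2 v.1 = (0 : k)) →
      Module.finrank k W₁ = Module.finrank k U →
      (∀ v ∈ W₂, ∀ w ∈ W₂, v.2 w.1 + w.2 v.1 = (0 : k)) →
      Module.finrank k W₂ = Module.finrank k U →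
      ellW k U W₁ = ellW k U W₂ → W₁ = W₂ := by
  refine ⟨fun W hiso hrank v => main_part1 W hiso hrank v, ?_⟩
  intro W₁ W₂ hiso₁ hrank₁ hiso₂ hrank₂ heq
  ext v
  have e1 := main_part1 W₁ hiso₁ hrank₁ v
  have e2 := main_part1 W₂ hiso₂ hrank₂ v
  rw [heq] at e1
  exact e1.trans e2.symm
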